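/- arXiv:1006.4527 — 2 statements merged into one kernel-verified Lean document; each statement's English description precedes it below -/
import Mathlib

section
/- On block-diagonal matrices the extended Lindblad generator reproduces the Lindblad rate generator: for all d×d complex matrices τ₁,…,τₙ one has 𝓛̃[ ∑_{j=1}^n τⱼ ⊗ Eⱼⱼ ] = ∑_{i=1}^n 𝒦ᵢ(τ₁,…,τₙ) ⊗ Eᵢᵢ. In particular the subspace of block-diagonal matrices is invariant under 𝓛̃, and for block-diagonal initial conditions the master equation d/dt η̃(t) = 𝓛̃[η̃(t)] is equivalent to the Lindblad rate equation d/dt ηᵢ(t) = 𝒦ᵢ(η₁(t),…,ηₙ(t)) for the diagonal blocks. -/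
open Matrix Kronecker

lemma kronT {n d : ℕ} (A : Matrix (Fin d) (Fin d) ℂ) (i j : Fin n) :
    (A ⊗ₖ Matrix.single i j (1 : ℂ))ᴴ = Aᴴ ⊗ₖ Matrix.single j i (1 : ℂ) := by
  ext ⟨a, b⟩ ⟨c, e⟩
  by_cases h1 : i = e <;> by_cases h2 : j = b <;>
    simp [conjTranspose_apply, Matrix.single, h1, h2, and_comm]

lemma kronM {n d : ℕ} (A B : Matrix (Fin d) (Fin d) ℂ) (i j k l : Fin n) :
    (A ⊗ₖ Matrix.single i j (1 : ℂ)) * (B ⊗ₖ Matrix.single k l (1 : ℂ)) =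
      if j = k then (A * B) ⊗ₖ Matrix.single i l (1 : ℂ) else 0 := by
  rw [← mul_kronecker_mul]
  by_cases h : j = k
  · subst h; rw [single_mul_single_same, if_pos rfl, one_mul]
  · rw [if_neg h, single_mul_single_of_ne (h := h), kronecker_zero]

lemma subK {n d : ℕ} (A B : Matrix (Fin d) (Fin d) ℂ) (i j : Fin n) :
    (A - B) ⊗ₖ Matrix.single i j (1:ℂ)
      = A ⊗ₖ Matrix.single i j (1:ℂ) - B ⊗ₖ Matrix.single i j (1:ℂ) := by
  ext ⟨a, b⟩ ⟨c, e⟩; simp [sub_mul]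

lemma sumK {n d : ℕ} {ι : Type*} (s : Finset ι) (f : ι → Matrix (Fin d) (Fin d) ℂ) (i j : Fin n) :
    (∑ x ∈ s, f x) ⊗ₖ Matrix.single i j (1:ℂ) = ∑ x ∈ s, f x ⊗ₖ Matrix.single i j (1:ℂ) := by
  ext ⟨a, b⟩ ⟨c, e⟩; simp [Matrix.sum_apply, Finset.sum_mul]


/-- The Lindblad rate generator
`𝒦ᵢ(τ₁,…,τₙ) = −i[Hⁱ,τᵢ] + ∑_{α∈A} ∑_k ( R^{ik}_α τ_k (R^{ik}_α)* − ½{(R^{ki}_α)* R^{ki}_α, τᵢ} )`. -/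
noncomputable def Kgen {n d : ℕ} {A : Type*} [Fintype A]
    (H : Fin n → Matrix (Fin d) (Fin d) ℂ)
    (R : A → Fin n → Fin n → Matrix (Fin d) (Fin d) ℂ)
    (τ : Fin n → Matrix (Fin d) (Fin d) ℂ) (i : Fin n) :
    Matrix (Fin d) (Fin d) ℂ :=
  -Complex.I • (H i * τ i - τ i * H i)
    + ∑ α : A, ∑ k : Fin n,
      (R α i k * τ k * (R α i k)ᴴ
        - (1/2 : ℂ) • ((R α k i)ᴴ * R α k i * τ i + τ i * ((R α k i)ᴴ * R α k i)))

/-- `H = ∑ᵢ Hⁱ ⊗ Eᵢᵢ` on `ℋ_S ⊗ ℂⁿ`. -/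
noncomputable def Hbig {n d : ℕ} (H : Fin n → Matrix (Fin d) (Fin d) ℂ) :
    Matrix (Fin d × Fin n) (Fin d × Fin n) ℂ :=
  ∑ i : Fin n, H i ⊗ₖ Matrix.single i i (1 : ℂ)

/-- `S^{ij}_α = R^{ij}_α ⊗ Eᵢⱼ`. -/
noncomputable def Sbig {n d : ℕ} {A : Type*}
    (R : A → Fin n → Fin n → Matrix (Fin d) (Fin d) ℂ) (α : A) (i j : Fin n) :
    Matrix (Fin d × Fin n) (Fin d × Fin n) ℂ :=
  R α i j ⊗ₖ Matrix.single i j (1 : ℂ)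

/-- The extended Lindblad generator
`𝓛̃[τ] = −i[H,τ] + ∑_{α,i,j} ( S^{ij}_α τ (S^{ij}_α)* − ½{(S^{ij}_α)* S^{ij}_α, τ} )`. -/
noncomputable def Ltilde {n d : ℕ} {A : Type*} [Fintype A]
    (H : Fin n → Matrix (Fin d) (Fin d) ℂ)
    (R : A → Fin n → Fin n → Matrix (Fin d) (Fin d) ℂ)
    (τ : Matrix (Fin d × Fin n) (Fin d × Fin n) ℂ) :
    Matrix (Fin d × Fin n) (Fin d × Fin n) ℂ :=
  -Complex.I • (Hbig H * τ - τ * Hbig H)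
    + ∑ α : A, ∑ i : Fin n, ∑ j : Fin n,
      (Sbig R α i j * τ * (Sbig R α i j)ᴴ
        - (1/2 : ℂ) • ((Sbig R α i j)ᴴ * Sbig R α i j * τ + τ * ((Sbig R α i j)ᴴ * Sbig R α i j)))

set_option maxHeartbeats 1600000 in
lemma part1 {n d : ℕ} {A : Type*} [Fintype A]
    (H : Fin n → Matrix (Fin d) (Fin d) ℂ)
    (R : A → Fin n → Fin n → Matrix (Fin d) (Fin d) ℂ)
    (τ : Fin n → Matrix (Fin d) (Fin d) ℂ) :
    Ltilde H R (∑ j : Fin n, τ j ⊗ₖ Matrix.single j j (1 : ℂ))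
      = ∑ i : Fin n, Kgen H R τ i ⊗ₖ Matrix.single i i (1 : ℂ) := by
  set D : Matrix (Fin d × Fin n) (Fin d × Fin n) ℂ :=
    ∑ j : Fin n, τ j ⊗ₖ Matrix.single j j (1 : ℂ) with hD
  have hHD : Hbig H * D = ∑ i : Fin n, (H i * τ i) ⊗ₖ Matrix.single i i (1:ℂ) := by
    rw [Hbig, hD, Finset.sum_mul]
    refine Finset.sum_congr rfl fun i _ => ?_
    rw [Finset.mul_sum]
    simp [kronM, Finset.sum_ite_eq]
  have hDH : D * Hbig H = ∑ i : Fin n, (τ i * H i) ⊗ₖ Matrix.single i i (1:ℂ) := by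
    rw [Hbig, hD, Finset.sum_mul]
    refine Finset.sum_congr rfl fun i _ => ?_
    rw [Finset.mul_sum]
    simp [kronM, Finset.sum_ite_eq]
  have hSDS : ∀ (α : A) (i j : Fin n),
      Sbig R α i j * D * (Sbig R α i j)ᴴ
        = (R α i j * τ j * (R α i j)ᴴ) ⊗ₖ Matrix.single i i (1:ℂ) := by
    intro α i j
    have h1 : Sbig R α i j * D = (R α i j * τ j) ⊗ₖ Matrix.single i j (1:ℂ) := by
      rw [Sbig, hD, Finset.mul_sum]
      simp [kronM, Finset.sum_ite_eq]
    rw [h1, Sbig, kronT, kronM, if_pos rfl]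
  have hSS : ∀ (α : A) (i j : Fin n),
      (Sbig R α i j)ᴴ * Sbig R α i j
        = ((R α i j)ᴴ * R α i j) ⊗ₖ Matrix.single j j (1:ℂ) := by
    intro α i j
    rw [Sbig, kronT, kronM, if_pos rfl]
  have hSSD : ∀ (α : A) (i j : Fin n),
      (Sbig R α i j)ᴴ * Sbig R α i j * D
        = ((R α i j)ᴴ * R α i j * τ j) ⊗ₖ Matrix.single j j (1:ℂ) := by
    intro α i j
    rw [hSS, hD, Finset.mul_sum]
    simp [kronM, Finset.sum_ite_eq]
  have hDSS : ∀ (α : A) (i j : Fin n),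
      D * ((Sbig R α i j)ᴴ * Sbig R α i j)
        = (τ j * ((R α i j)ᴴ * R α i j)) ⊗ₖ Matrix.single j j (1:ℂ) := by
    intro α i j
    rw [hSS, hD, Finset.sum_mul]
    simp [kronM, Finset.sum_ite_eq']
  have h2 : ∀ (α : A) (i j : Fin n),
      Sbig R α i j * D * (Sbig R α i j)ᴴ
        - (1/2:ℂ) • ((Sbig R α i j)ᴴ * Sbig R α i j * D + D * ((Sbig R α i j)ᴴ * Sbig R α i j))
      = (R α i j * τ j * (R α i j)ᴴ) ⊗ₖ Matrix.single i i (1:ℂ)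
        - ((1/2:ℂ) • ((R α i j)ᴴ * R α i j * τ j + τ j * ((R α i j)ᴴ * R α i j)))
            ⊗ₖ Matrix.single j j (1:ℂ) := by
    intro α i j
    rw [hSDS, hSSD, hDSS, smul_kronecker, add_kronecker]
  have h3 : (∑ α : A, ∑ i : Fin n, ∑ j : Fin n,
      (Sbig R α i j * D * (Sbig R α i j)ᴴ
        - (1/2:ℂ) • ((Sbig R α i j)ᴴ * Sbig R α i j * D + D * ((Sbig R α i j)ᴴ * Sbig R α i j))))
      = ∑ i : Fin n, (∑ α : A, ∑ k : Fin n,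
          (R α i k * τ k * (R α i k)ᴴ
            - (1/2:ℂ) • ((R α k i)ᴴ * R α k i * τ i + τ i * ((R α k i)ᴴ * R α k i))))
            ⊗ₖ Matrix.single i i (1:ℂ) := by
    calc ∑ α : A, ∑ i : Fin n, ∑ j : Fin n,
        (Sbig R α i j * D * (Sbig R α i j)ᴴ
          - (1/2:ℂ) • ((Sbig R α i j)ᴴ * Sbig R α i j * D + D * ((Sbig R α i j)ᴴ * Sbig R α i j)))
        = ∑ α : A, ∑ i : Fin n, ∑ j : Fin n,
          ((R α i j * τ j * (R α i j)ᴴ) ⊗ₖ Matrix.single i i (1:ℂ)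
            - ((1/2:ℂ) • ((R α i j)ᴴ * R α i j * τ j + τ j * ((R α i j)ᴴ * R α i j)))
                ⊗ₖ Matrix.single j j (1:ℂ)) := by
          simp only [h2]
      _ = ∑ α : A, ∑ i : Fin n, ∑ j : Fin n,
          (R α i j * τ j * (R α i j)ᴴ) ⊗ₖ Matrix.single i i (1:ℂ)
          - ∑ α : A, ∑ i : Fin n, ∑ j : Fin n,
          ((1/2:ℂ) • ((R α i j)ᴴ * R α i j * τ j + τ j * ((R α i j)ᴴ * R α i j)))
                ⊗ₖ Matrix.single j j (1:ℂ) := by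
          simp [Finset.sum_sub_distrib]
      _ = ∑ α : A, ∑ i : Fin n, ∑ j : Fin n,
          (R α i j * τ j * (R α i j)ᴴ) ⊗ₖ Matrix.single i i (1:ℂ)
          - ∑ α : A, ∑ i : Fin n, ∑ j : Fin n,
          ((1/2:ℂ) • ((R α j i)ᴴ * R α j i * τ i + τ i * ((R α j i)ᴴ * R α j i)))
                ⊗ₖ Matrix.single i i (1:ℂ) := by
          congr 1
          refine Finset.sum_congr rfl fun α _ => ?_
          exact Finset.sum_comm
      _ = ∑ α : A, ∑ i : Fin n, ∑ j : Fin n,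
          ((R α i j * τ j * (R α i j)ᴴ
            - (1/2:ℂ) • ((R α j i)ᴴ * R α j i * τ i + τ i * ((R α j i)ᴴ * R α j i)))
                ⊗ₖ Matrix.single i i (1:ℂ)) := by
          simp [Finset.sum_sub_distrib, subK]
      _ = ∑ i : Fin n, ∑ α : A, ∑ j : Fin n,
          ((R α i j * τ j * (R α i j)ᴴ
            - (1/2:ℂ) • ((R α j i)ᴴ * R α j i * τ i + τ i * ((R α j i)ᴴ * R α j i)))
                ⊗ₖ Matrix.single i i (1:ℂ)) := Finset.sum_comm
      _ = _ := by
          refine Finset.sum_congr rfl fun i _ => ?_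
          rw [sumK]
          refine Finset.sum_congr rfl fun α _ => ?_
          rw [sumK]
  rw [Ltilde, hHD, hDH, h3, ← Finset.sum_sub_distrib, Finset.smul_sum,
    ← Finset.sum_add_distrib]
  refine Finset.sum_congr rfl fun i _ => ?_
  rw [Kgen, add_kronecker, smul_kronecker, subK]


/-- On block-diagonal matrices the extended Lindblad generator reproduces the Lindblad rate
generator: `𝓛̃[∑ⱼ τⱼ ⊗ Eⱼⱼ] = ∑ᵢ 𝒦ᵢ(τ₁,…,τₙ) ⊗ Eᵢᵢ`; in particular the subspace of
block-diagonal matrices is invariant under `𝓛̃`. -/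
theorem ltilde_blockDiagonal {n d : ℕ} (hn : 1 ≤ n) (hd : 1 ≤ d)
    {A : Type*} [Fintype A]
    (H : Fin n → Matrix (Fin d) (Fin d) ℂ) (hH : ∀ i, (H i).IsHermitian)
    (R : A → Fin n → Fin n → Matrix (Fin d) (Fin d) ℂ) :
    (∀ τ : Fin n → Matrix (Fin d) (Fin d) ℂ,
      Ltilde H R (∑ j : Fin n, τ j ⊗ₖ Matrix.single j j (1 : ℂ))
        = ∑ i : Fin n, Kgen H R τ i ⊗ₖ Matrix.single i i (1 : ℂ)) ∧
    (∀ X : Matrix (Fin d × Fin n) (Fin d × Fin n) ℂ,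
      (∀ p q, p.2 ≠ q.2 → X p q = 0) →
      ∀ p q, p.2 ≠ q.2 → Ltilde H R X p q = 0) := by
  refine ⟨part1 H R, ?_⟩
  intro X hX p q hpq
  set τ : Fin n → Matrix (Fin d) (Fin d) ℂ := fun k => fun a b => X (a, k) (b, k) with hτ
  have hXD : X = ∑ j : Fin n, τ j ⊗ₖ Matrix.single j j (1 : ℂ) := by
    ext ⟨a, u⟩ ⟨b, v⟩
    by_cases huv : u = v
    · subst huv
      simp only [Matrix.sum_apply, kroneckerMap_apply, Matrix.single, of_apply]
      simp [Matrix.sum_apply, kroneckerMap_apply, Matrix.single, hτ, Finset.sum_ite_eq']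
    · rw [hX (a, u) (b, v) huv]
      simp only [Matrix.sum_apply, kroneckerMap_apply, Matrix.single, of_apply]
      refine (Finset.sum_eq_zero fun j _ => ?_).symm
      rw [if_neg, mul_zero]
      rintro ⟨rfl, rfl⟩; exact huv rfl
  rw [hXD, part1 H R τ]
  obtain ⟨pa, pu⟩ := p
  obtain ⟨qa, qv⟩ := q
  simp only [Matrix.sum_apply, kroneckerMap_apply, Matrix.single, of_apply]
  refine Finset.sum_eq_zero fun i _ => ?_
  rw [if_neg, mul_zero]
  rintro ⟨rfl, rfl⟩; exact hpq rfl
end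

section
/- The average equilibrium state of the two-level system equals η₁(∞) + η₂(∞) = pκ P₊ + (1 − pκ) P₋, i.e., p·z₁⁺ + (1−p)·z₂⁺ = pκ and p·z₁⁻ + (1−p)·z₂⁻ = 1 − pκ, where η₁(∞) = p(z₁⁺P₊ + z₁⁻P₋) and η₂(∞) = (1−p)(z₂⁺P₊ + z₂⁻P₋). -/
open Matrix
open scoped ComplexOrder

noncomputable section TwoLevel

def σm : Matrix (Fin 2) (Fin 2) ℂ := !![0, 0; 1, 0]
def σp : Matrix (Fin 2) (Fin 2) ℂ := !![0, 1; 0, 0]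
def σz : Matrix (Fin 2) (Fin 2) ℂ := !![1, 0; 0, -1]
def Pp : Matrix (Fin 2) (Fin 2) ℂ := !![1, 0; 0, 0]
def Pm : Matrix (Fin 2) (Fin 2) ℂ := !![0, 0; 0, 1]

/-- `𝒦₁` of the two-level model. -/
def K1 (γ₀ γ₁ γ₂ κ ω₁ : ℝ) (η₁ η₂ : Matrix (Fin 2) (Fin 2) ℂ) :
    Matrix (Fin 2) (Fin 2) ℂ :=
  (γ₀ : ℂ) • (σm * η₁ * σp - (1/2 : ℂ) • (Pp * η₁ + η₁ * Pp))
    + (γ₂ : ℂ) • (σp * η₂ * σm)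
    - ((γ₁ : ℂ)/2) • (Pp * η₁ + η₁ * Pp)
    - ((γ₀ : ℂ) * (κ : ℂ)) • η₁
    - (Complex.I * (ω₁ : ℂ) / 2) • (σz * η₁ - η₁ * σz)

/-- `𝒦₂` of the two-level model. -/
def K2 (γ₀ γ₁ γ₂ κ ω₂ : ℝ) (η₁ η₂ : Matrix (Fin 2) (Fin 2) ℂ) :
    Matrix (Fin 2) (Fin 2) ℂ :=
  (γ₀ : ℂ) • (σm * η₂ * σp - (1/2 : ℂ) • (Pp * η₂ + η₂ * Pp))
    + (γ₁ : ℂ) • (σm * η₁ * σp)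
    - ((γ₂ : ℂ)/2) • (Pm * η₂ + η₂ * Pm)
    + ((γ₀ : ℂ) * (κ : ℂ)) • η₁
    - (Complex.I * (ω₂ : ℂ) / 2) • (σz * η₂ - η₂ * σz)

/-- `κ₂ = γ₂κ/(γ₁+γ₀(1+κ))`. -/
def κ₂ (γ₀ γ₁ γ₂ κ : ℝ) : ℝ := γ₂ * κ / (γ₁ + γ₀ * (1 + κ))

/-- `z₁⁺ = κ₁/(1+κ₁)` with `κ₁ = κ`. -/
def z1p (κ : ℝ) : ℝ := κ / (1 + κ)

/-- `z₂⁺ = κ₂/(1+κ₂)`. -/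
def z2p (γ₀ γ₁ γ₂ κ : ℝ) : ℝ := κ₂ γ₀ γ₁ γ₂ κ / (1 + κ₂ γ₀ γ₁ γ₂ κ)

/-- `p = γ₂(1+κ)/(γ₂ + κ(γ₀+γ₁+γ₂) + κ²(γ₀+γ₂))`. -/
def peq (γ₀ γ₁ γ₂ κ : ℝ) : ℝ :=
  γ₂ * (1 + κ) / (γ₂ + κ * (γ₀ + γ₁ + γ₂) + κ ^ 2 * (γ₀ + γ₂))

/-- `η₁(∞) = p(z₁⁺P₊ + z₁⁻P₋)`. -/
def η1eq (γ₀ γ₁ γ₂ κ : ℝ) : Matrix (Fin 2) (Fin 2) ℂ :=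
  (peq γ₀ γ₁ γ₂ κ : ℂ) • ((z1p κ : ℂ) • Pp + ((1 - z1p κ : ℝ) : ℂ) • Pm)

/-- `η₂(∞) = (1−p)(z₂⁺P₊ + z₂⁻P₋)`. -/
def η2eq (γ₀ γ₁ γ₂ κ : ℝ) : Matrix (Fin 2) (Fin 2) ℂ :=
  ((1 - peq γ₀ γ₁ γ₂ κ : ℝ) : ℂ) •
    ((z2p γ₀ γ₁ γ₂ κ : ℂ) • Pp + ((1 - z2p γ₀ γ₁ γ₂ κ : ℝ) : ℂ) • Pm)

end TwoLevel

lemma two_level_key (γ₀ γ₁ γ₂ κ : ℝ)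
    (hγ₀ : 0 < γ₀) (hγ₁ : 0 < γ₁) (hγ₂ : 0 < γ₂) (hκ : 0 < κ) :
    peq γ₀ γ₁ γ₂ κ * z1p κ + (1 - peq γ₀ γ₁ γ₂ κ) * z2p γ₀ γ₁ γ₂ κ
      = peq γ₀ γ₁ γ₂ κ * κ := by
  have hd1 : γ₁ + γ₀ * (1 + κ) > 0 := by nlinarith
  have hd2 : (1 : ℝ) + κ > 0 := by linarith
  have hd3 : 1 + κ₂ γ₀ γ₁ γ₂ κ > 0 := by
    unfold κ₂
    positivity
  have hd4 : γ₂ + κ * (γ₀ + γ₁ + γ₂) + κ ^ 2 * (γ₀ + γ₂) > 0 := by nlinarith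
  unfold peq z1p z2p κ₂ at *
  field_simp at *
  ring

/-- The average equilibrium state of the two-level system equals
`η₁(∞) + η₂(∞) = pκ P₊ + (1 − pκ) P₋`, i.e. `p z₁⁺ + (1−p) z₂⁺ = pκ` and
`p z₁⁻ + (1−p) z₂⁻ = 1 − pκ`. -/
theorem two_level_average_equilibrium (γ₀ γ₁ γ₂ κ : ℝ)
    (hγ₀ : 0 < γ₀) (hγ₁ : 0 < γ₁) (hγ₂ : 0 < γ₂) (hκ : 0 < κ) :
    η1eq γ₀ γ₁ γ₂ κ + η2eq γ₀ γ₁ γ₂ κ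
      = ((peq γ₀ γ₁ γ₂ κ * κ : ℝ) : ℂ) • Pp + ((1 - peq γ₀ γ₁ γ₂ κ * κ : ℝ) : ℂ) • Pm ∧
    peq γ₀ γ₁ γ₂ κ * z1p κ + (1 - peq γ₀ γ₁ γ₂ κ) * z2p γ₀ γ₁ γ₂ κ
      = peq γ₀ γ₁ γ₂ κ * κ ∧
    peq γ₀ γ₁ γ₂ κ * (1 - z1p κ) + (1 - peq γ₀ γ₁ γ₂ κ) * (1 - z2p γ₀ γ₁ γ₂ κ)
      = 1 - peq γ₀ γ₁ γ₂ κ * κ := by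
  have key := two_level_key γ₀ γ₁ γ₂ κ hγ₀ hγ₁ hγ₂ hκ
  refine ⟨?_, key, by linarith⟩
  unfold η1eq η2eq
  have h1 : ((peq γ₀ γ₁ γ₂ κ * κ : ℝ) : ℂ)
      = (peq γ₀ γ₁ γ₂ κ : ℂ) * (z1p κ : ℂ)
        + ((1 - peq γ₀ γ₁ γ₂ κ : ℝ) : ℂ) * (z2p γ₀ γ₁ γ₂ κ : ℂ) := by
    push_cast
    exact_mod_cast congrArg (Complex.ofReal) key.symm
  have h2 : ((1 - peq γ₀ γ₁ γ₂ κ * κ : ℝ) : ℂ)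
      = (peq γ₀ γ₁ γ₂ κ : ℂ) * ((1 - z1p κ : ℝ) : ℂ)
        + ((1 - peq γ₀ γ₁ γ₂ κ : ℝ) : ℂ) * ((1 - z2p γ₀ γ₁ γ₂ κ : ℝ) : ℂ) := by
    have h : peq γ₀ γ₁ γ₂ κ * (1 - z1p κ) + (1 - peq γ₀ γ₁ γ₂ κ) * (1 - z2p γ₀ γ₁ γ₂ κ)
        = 1 - peq γ₀ γ₁ γ₂ κ * κ := by linarith
    rw [← h]; push_cast; ring
  rw [h1, h2]
  module
end
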